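/- arXiv:2510.16782 — 3 statements merged into one kernel-verified Lean document; each statement's English description precedes it below -/
import Mathlib

section
/- For the Multiplicative Weights Update algorithm with step size η = √(log n / T)/B over n actions and T rounds, where at round t the strategy is x^(t)(i) ∝ exp(−η Σ_{τ<t} ℓ^(τ)(i)) and loss vectors ℓ^(t) ∈ [0,B]^n are arbitrary, the external regret Σ_t ⟨x^(t), ℓ^(t)⟩ − min_{x ∈ Δ([n])} Σ_t ⟨x, ℓ^(t)⟩ is at most 2B√(T log n). -/
open Finset

private lemma exp_neg_le_quad (z : ℝ) (hz : 0 ≤ z) : Real.exp (-z) ≤ 1 - z + z^2 := by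
  have h1 : 1 + z ≤ Real.exp z := by linarith [Real.add_one_le_exp z]
  have hpos : (0:ℝ) < 1 + z := by linarith
  have h3 : (Real.exp z)⁻¹ ≤ (1+z)⁻¹ := inv_anti₀ hpos h1
  have h4 : (1+z)⁻¹ ≤ 1 - z + z^2 := by
    rw [inv_le_iff_one_le_mul₀ hpos]
    nlinarith [pow_nonneg hz 3]
  calc Real.exp (-z) = (Real.exp z)⁻¹ := Real.exp_neg z
    _ ≤ (1+z)⁻¹ := h3
    _ ≤ 1 - z + z^2 := h4

set_option maxHeartbeats 1600000 in
/-- Regret bound for the Multiplicative Weights Update algorithm with step size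
η = √(log n / T)/B: for arbitrary loss vectors in [0,B]^n, the external regret
is at most 2B√(T log n). -/
theorem mwu_regret (n T : ℕ) (B : ℝ) (hB : 0 < B)
    (ℓ : Fin T → Fin n → ℝ) (hℓ : ∀ t i, ℓ t i ∈ Set.Icc 0 B)
    (η : ℝ) (hη : η = Real.sqrt (Real.log n / T) / B)
    (x : Fin T → Fin n → ℝ)
    (hx : ∀ t i, x t i =
        Real.exp (-η * ∑ τ ∈ Finset.univ.filter (· < t), ℓ τ i)
          / ∑ j, Real.exp (-η * ∑ τ ∈ Finset.univ.filter (· < t), ℓ τ j)) :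
    ∀ y : Fin n → ℝ, (∀ i, 0 ≤ y i) → ∑ i, y i = 1 →
      ∑ t, ∑ i, x t i * ℓ t i - ∑ t, ∑ i, y i * ℓ t i
        ≤ 2 * B * Real.sqrt (T * Real.log n) := by
  intro y hy hy1
  -- dispose of n = 0
  rcases Nat.eq_zero_or_pos n with hn0 | hn
  · subst hn0; simp at hy1
  have hne : Nonempty (Fin n) := ⟨⟨0, hn⟩⟩
  -- dispose of n = 1
  have hn1 : n = 1 ∨ 2 ≤ n := by omega
  rcases hn1 with hn1 | hn2
  · subst hn1
    have hx1 : ∀ t, x t 0 = 1 := by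
      intro t
      rw [hx t 0, Fin.sum_univ_one]
      exact div_self (Real.exp_pos _).ne'
    rw [Fin.sum_univ_one] at hy1
    have hrhs : (0:ℝ) ≤ 2 * B * Real.sqrt (T * Real.log 1) := by positivity
    simp only [Fin.sum_univ_one, hx1, hy1, one_mul]
    simp only [Real.log_one] at hrhs
    simpa using hrhs
  -- dispose of T = 0
  rcases Nat.eq_zero_or_pos T with hT0 | hTpos
  · subst hT0
    simp
  -- main case: n ≥ 2, T ≥ 1
  have hLpos : 0 < Real.log n := Real.log_pos (by exact_mod_cast hn2)
  have hTR : (0:ℝ) < T := by exact_mod_cast hTpos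
  have hηpos : 0 < η := by
    rw [hη]
    apply div_pos _ hB
    apply Real.sqrt_pos.mpr
    positivity
  -- cumulative losses and weights
  set S : ℕ → Fin n → ℝ := fun k i => ∑ τ ∈ univ.filter (fun τ : Fin T => (τ:ℕ) < k), ℓ τ i with hS
  set W : ℕ → ℝ := fun k => ∑ i, Real.exp (-η * S k i) with hW
  have hWpos : ∀ k, 0 < W k := by
    intro k
    exact Finset.sum_pos (fun i _ => Real.exp_pos _) univ_nonempty
  have hfil : ∀ t : Fin T, univ.filter (· < t) = univ.filter (fun τ : Fin T => (τ:ℕ) < (t:ℕ)) := by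
    intro t
    apply Finset.filter_congr
    intro τ _
    exact Iff.rfl
  have hx' : ∀ (t : Fin T) i, x t i = Real.exp (-η * S (t:ℕ) i) / W (t:ℕ) := by
    intro t i
    rw [hx t i, hfil t]
  have hxpos : ∀ (t : Fin T) i, 0 < x t i := by
    intro t i
    rw [hx']
    exact div_pos (Real.exp_pos _) (hWpos _)
  have hxsum : ∀ t : Fin T, ∑ i, x t i = 1 := by
    intro t
    rw [show (∑ i, x t i) = (∑ i, Real.exp (-η * S (t:ℕ) i)) / W (t:ℕ) by
      rw [Finset.sum_div]; exact Finset.sum_congr rfl (fun i _ => hx' t i)]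
    exact div_self (hWpos _).ne'
  -- per-round step
  have hstep : ∀ k (hk : k < T),
      Real.log (W (k+1)) ≤ Real.log (W k)
        - η * (∑ i, x ⟨k, hk⟩ i * ℓ ⟨k, hk⟩ i) + η^2 * B^2 := by
    intro k hk
    set t : Fin T := ⟨k, hk⟩ with ht
    set P := ∑ i, x t i * ℓ t i with hP
    have hSsucc : ∀ i, S (k+1) i = S k i + ℓ t i := by
      intro i
      have hins : (univ.filter (fun τ : Fin T => (τ:ℕ) < k+1))
          = insert t (univ.filter (fun τ : Fin T => (τ:ℕ) < k)) := by
        ext τ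
        simp only [Finset.mem_insert, Finset.mem_filter, Finset.mem_univ, true_and, ht,
          Fin.ext_iff]
        omega
      simp only [hS, hins]
      rw [Finset.sum_insert (by simp [ht])]
      ring
    have hwx : ∀ i, Real.exp (-η * S k i) = x t i * W k := by
      intro i
      rw [hx' t i]
      exact (div_mul_cancel₀ _ (hWpos k).ne').symm
    have key : W (k+1) ≤ W k * (1 - η * P + η^2 * B^2) := by
      have step1 : W (k+1) = ∑ i, Real.exp (-η * S k i) * Real.exp (-(η * ℓ t i)) := by
        simp only [hW]
        refine Finset.sum_congr rfl (fun i _ => ?_)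
        rw [← Real.exp_add, hSsucc i]
        ring_nf
      have step2 : ∀ i, Real.exp (-η * S k i) * Real.exp (-(η * ℓ t i))
          ≤ W k * (x t i - η * (x t i * ℓ t i) + η^2 * B^2 * x t i) := by
        intro i
        have hl := hℓ t i
        obtain ⟨hl0, hlB⟩ := hl
        have hz : 0 ≤ η * ℓ t i := mul_nonneg hηpos.le hl0
        have hexp := exp_neg_le_quad (η * ℓ t i) hz
        have hwpos : (0:ℝ) < Real.exp (-η * S k i) := Real.exp_pos _
        have h1 : Real.exp (-η * S k i) * Real.exp (-(η * ℓ t i))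
            ≤ Real.exp (-η * S k i) * (1 - η * ℓ t i + (η * ℓ t i)^2) :=
          mul_le_mul_of_nonneg_left hexp hwpos.le
        rw [hwx i] at h1 ⊢
        have hxp := (hxpos t i).le
        have hWp := (hWpos k).le
        have hl2 : (ℓ t i)^2 ≤ B^2 := by nlinarith
        nlinarith [mul_nonneg (mul_nonneg hWp hxp) (sq_nonneg η)]
      have step3 : ∑ i, W k * (x t i - η * (x t i * ℓ t i) + η^2 * B^2 * x t i)
          = W k * (1 - η * P + η^2 * B^2) := by
        rw [← Finset.mul_sum]
        congr 1
        rw [Finset.sum_add_distrib, Finset.sum_sub_distrib, ← Finset.mul_sum, ← Finset.mul_sum,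
          hxsum t, hP]
        ring
      calc W (k+1) = ∑ i, Real.exp (-η * S k i) * Real.exp (-(η * ℓ t i)) := step1
        _ ≤ ∑ i, W k * (x t i - η * (x t i * ℓ t i) + η^2 * B^2 * x t i) :=
            Finset.sum_le_sum (fun i _ => step2 i)
        _ = W k * (1 - η * P + η^2 * B^2) := step3
    have hc : 0 < 1 - η * P + η^2 * B^2 := by
      by_contra h
      push_neg at h
      nlinarith [hWpos (k+1), hWpos k, mul_nonpos_of_nonneg_of_nonpos (hWpos k).le h]
    calc Real.log (W (k+1)) ≤ Real.log (W k * (1 - η * P + η^2 * B^2)) :=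
          Real.log_le_log (hWpos (k+1)) key
      _ = Real.log (W k) + Real.log (1 - η * P + η^2 * B^2) :=
          Real.log_mul (hWpos k).ne' hc.ne'
      _ ≤ Real.log (W k) + (1 - η * P + η^2 * B^2 - 1) := by
          linarith [Real.log_le_sub_one_of_pos hc]
      _ = Real.log (W k) - η * P + η^2 * B^2 := by ring
  -- induction
  have hind : ∀ k, k ≤ T → Real.log (W k) ≤ Real.log n
      - η * (∑ t ∈ univ.filter (fun t : Fin T => (t:ℕ) < k), ∑ i, x t i * ℓ t i)
      + k * (η^2 * B^2) := by
    intro k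
    induction k with
    | zero =>
      intro _
      have hW0 : W 0 = n := by
        simp [hW, hS]
      rw [hW0]
      simp
    | succ k ih =>
      intro hk1
      have hk : k < T := hk1
      have hstep' := hstep k hk
      have hins : (univ.filter (fun τ : Fin T => (τ:ℕ) < k+1))
          = insert (⟨k, hk⟩ : Fin T) (univ.filter (fun τ : Fin T => (τ:ℕ) < k)) := by
        ext τ
        simp only [Finset.mem_insert, Finset.mem_filter, Finset.mem_univ, true_and, Fin.ext_iff]
        omega
      rw [hins, Finset.sum_insert (by simp)]
      have := ih hk.le
      push_cast
      ring_nf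
      ring_nf at this hstep' ⊢
      linarith
  have hT' := hind T le_rfl
  have huniv : univ.filter (fun t : Fin T => (t:ℕ) < T) = univ := by
    apply Finset.filter_true_of_mem
    intro t _
    exact t.is_lt
  rw [huniv] at hT'
  -- lower bound via comparator y
  have hlow : ∀ i, -η * S T i ≤ Real.log (W T) := by
    intro i
    have h1 : Real.exp (-η * S T i) ≤ W T := by
      simp only [hW]
      exact Finset.single_le_sum (f := fun j => Real.exp (-η * S T j))
        (fun j _ => (Real.exp_pos _).le) (mem_univ i)
    calc -η * S T i = Real.log (Real.exp (-η * S T i)) := (Real.log_exp _).symm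
      _ ≤ Real.log (W T) := Real.log_le_log (Real.exp_pos _) h1
  have hylow : -η * (∑ i, y i * S T i) ≤ Real.log (W T) := by
    have e1 : -η * (∑ i, y i * S T i) = ∑ i, y i * (-η * S T i) := by
      rw [Finset.mul_sum]
      exact Finset.sum_congr rfl (fun i _ => by ring)
    rw [e1]
    calc ∑ i, y i * (-η * S T i) ≤ ∑ i, y i * Real.log (W T) :=
          Finset.sum_le_sum (fun i _ => mul_le_mul_of_nonneg_left (hlow i) (hy i))
      _ = Real.log (W T) := by rw [← Finset.sum_mul, hy1, one_mul]
  have hswap : ∑ t, ∑ i, y i * ℓ t i = ∑ i, y i * S T i := by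
    rw [Finset.sum_comm]
    refine Finset.sum_congr rfl (fun i _ => ?_)
    simp only [hS, huniv]
    rw [Finset.mul_sum]
  -- combine
  have main : η * ((∑ t, ∑ i, x t i * ℓ t i) - ∑ i, y i * S T i)
      ≤ Real.log n + T * (η^2 * B^2) := by
    rw [mul_sub]
    linarith [hT', hylow]
  -- arithmetic with the value of η
  have hsq : η^2 * B^2 = Real.log n / T := by
    rw [hη]
    rw [div_pow, Real.sq_sqrt (by positivity)]
    field_simp
  have hval : Real.log n + T * (η^2 * B^2) = η * (2 * B * Real.sqrt (T * Real.log n)) := by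
    have h1 : (T:ℝ) * (η^2 * B^2) = Real.log n := by
      rw [hsq]; field_simp
    rw [h1]
    have hsd : Real.sqrt (Real.log n / T) = Real.sqrt (Real.log n) / Real.sqrt T :=
      Real.sqrt_div hLpos.le T
    have hsm : Real.sqrt (T * Real.log n) = Real.sqrt T * Real.sqrt (Real.log n) :=
      Real.sqrt_mul hTR.le _
    rw [hη, hsd, hsm]
    have hsT : Real.sqrt T ≠ 0 := by positivity
    have hsL : Real.sqrt (Real.log n) * Real.sqrt (Real.log n) = Real.log n :=
      Real.mul_self_sqrt hLpos.le
    field_simp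
    linear_combination (-2) * hsL
  rw [hswap]
  rw [hval] at main
  exact le_of_mul_le_mul_left (by linarith [main]) hηpos
end

section
/- Given an algorithm A that finds an ε-correlated equilibrium of the hard instance game with success probability at least 1 − δ, one can solve m independent copies of the n-item search problem (finding k_i for each i ∈ [m]) with success probability at least 1 − (δ + εm/B), using a single invocation of A followed by sampling one joint action from the output distribution. -/
open Finset

open scoped Classical in
/-- Reduction: if an algorithm (modeled as a random variable `out` over output
distributions on a finite probability space (Ω, μ)) produces an ε-correlated
equilibrium of the hard instance game with probability at least 1 - δ, then
sampling one joint action from the output recovers all hidden targets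
(k_1,...,k_m), i.e. solves the m-fold n-item search problem, with probability at
least 1 - (δ + εm/B). -/
theorem ce_solves_m_fold_search (m n : ℕ) (B ε δ : ℝ) (hB : 0 < B) (hε : 0 ≤ ε)
    (hδ0 : 0 ≤ δ) (hδ1 : δ ≤ 1)
    (k : Fin m → Fin n)
    (L : Fin m → (Fin m → Fin n) → ℝ)
    (hLdef : ∀ i a, L i a = if a i = k i then 0 else B)
    (Ω : Type*) [Fintype Ω] (μ : Ω → ℝ)
    (hμ0 : ∀ ω, 0 ≤ μ ω) (hμ1 : ∑ ω, μ ω = 1)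
    (out : Ω → (Fin m → Fin n) → ℝ)
    (hout0 : ∀ ω a, 0 ≤ out ω a) (hout1 : ∀ ω, ∑ a, out ω a = 1)
    (hsucc : 1 - δ ≤
      ∑ ω ∈ Finset.univ.filter (fun ω => ∀ (i : Fin m) (φ : Fin n → Fin n),
        ∑ a, out ω a * L i a ≤ ∑ a, out ω a * L i (Function.update a i (φ (a i))) + ε),
        μ ω) :
    1 - (δ + ε * m / B) ≤ ∑ ω, μ ω * out ω k := by
  set c : ℝ := ε * m / B with hc
  have hc0 : 0 ≤ c := by positivity
  have hnn : 0 ≤ ∑ ω, μ ω * out ω k :=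
    Finset.sum_nonneg fun ω _ => mul_nonneg (hμ0 ω) (hout0 ω k)
  by_cases hc1 : 1 - c ≤ 0
  · linarith
  push_neg at hc1
  have key : ∀ ω : Ω, (∀ (i : Fin m) (φ : Fin n → Fin n),
        ∑ a, out ω a * L i a ≤ ∑ a, out ω a * L i (Function.update a i (φ (a i))) + ε) →
      1 - c ≤ out ω k := by
    intro ω hω
    have hp : ∀ i : Fin m, ∑ a, (if a i = k i then (0:ℝ) else out ω a) ≤ ε / B := by
      intro i
      have h := hω i (fun _ => k i)
      have h3 : ∑ a, out ω a * L i (Function.update a i (k i)) = 0 := by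
        apply Finset.sum_eq_zero
        intro a _
        rw [hLdef]
        simp
      rw [h3, zero_add] at h
      have h4 : ∑ a, out ω a * L i a = B * ∑ a, (if a i = k i then (0:ℝ) else out ω a) := by
        rw [Finset.mul_sum]
        apply Finset.sum_congr rfl
        intro a _
        rw [hLdef]
        by_cases hx : a i = k i <;> simp [hx] <;> ring
      rw [h4] at h
      rw [le_div_iff₀ hB]
      linarith
    have e0 : ∑ a, (if a = k then out ω a else 0) = out ω k := by
      simp
    have e1 : ∑ a, (if a = k then (0:ℝ) else out ω a) = 1 - out ω k := by
      have : ∑ a, (if a = k then (0:ℝ) else out ω a)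
          = ∑ a, (out ω a - if a = k then out ω a else 0) := by
        apply Finset.sum_congr rfl
        intro a _
        by_cases h : a = k <;> simp [h]
      rw [this, Finset.sum_sub_distrib, hout1, e0]
    have step : ∑ a, (if a = k then (0:ℝ) else out ω a)
        ≤ ∑ a, ∑ i : Fin m, (if a i = k i then (0:ℝ) else out ω a) := by
      apply Finset.sum_le_sum
      intro a _
      by_cases h : a = k
      · subst h; simp
      · obtain ⟨i, hi⟩ := Function.ne_iff.mp h
        rw [if_neg h]
        have hle := Finset.single_le_sum
          (f := fun j : Fin m => if a j = k j then (0:ℝ) else out ω a)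
          (fun j _ => by by_cases hx : a j = k j <;> simp [hx, hout0])
          (Finset.mem_univ i)
        simpa [hi] using hle
    have hsum : ∑ i : Fin m, ∑ a, (if a i = k i then (0:ℝ) else out ω a) ≤ c := by
      calc ∑ i : Fin m, ∑ a, (if a i = k i then (0:ℝ) else out ω a)
          ≤ ∑ _i : Fin m, ε / B := Finset.sum_le_sum fun i _ => hp i
        _ = m * (ε / B) := by simp [Finset.sum_const, Finset.card_univ]
        _ = c := by rw [hc]; ring
    rw [Finset.sum_comm] at step
    rw [e1] at step
    linarith
  set S := Finset.univ.filter (fun ω : Ω => ∀ (i : Fin m) (φ : Fin n → Fin n),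
        ∑ a, out ω a * L i a ≤ ∑ a, out ω a * L i (Function.update a i (φ (a i))) + ε) with hS
  have hSmu : ∑ ω ∈ S, μ ω ≤ 1 := by
    rw [← hμ1]
    exact Finset.sum_le_sum_of_subset_of_nonneg (Finset.filter_subset _ _)
      (fun ω _ _ => hμ0 ω)
  have h1 : (1 - c) * ∑ ω ∈ S, μ ω ≤ ∑ ω ∈ S, μ ω * out ω k := by
    rw [Finset.mul_sum]
    apply Finset.sum_le_sum
    intro ω hωS
    rw [hS, Finset.mem_filter] at hωS
    have hk := key ω hωS.2
    have := hμ0 ω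
    nlinarith
  have h2 : ∑ ω ∈ S, μ ω * out ω k ≤ ∑ ω, μ ω * out ω k :=
    Finset.sum_le_sum_of_subset_of_nonneg (Finset.filter_subset _ _)
      (fun ω _ _ => mul_nonneg (hμ0 ω) (hout0 ω k))
  nlinarith [hsucc, h1, h2]
end

section
/- Composing deterministic query lower bounds: if finding an ε-correlated equilibrium of the hard instance with success probability at least 2/3 requires solving m independent copies of unstructured search with success probability at least 2/3 − εm/B, and the strong direct product theorem gives Q_{1−k^{m/2}}(f^(m)) ≥ (m·ln(3k/2)/8000)·Q_{1/4}(f) with Q_{1/4}(search on n items) = Ω(√n), then for 0 < ε < min{1/3, 2B/(3m)}, computing an ε-correlated equilibrium of an m-player n-action normal-form game requires Ω(m√n) quantum queries. -/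
/-- Composing the reduction to m-fold search with the strong direct product
theorem and the Ω(√n) search lower bound: if the query complexity QCE of
computing an ε-correlated equilibrium dominates the complexity Qdp of m-fold
search with success probability 1 − k^{m/2} (where k = (1/3 + εm/B)^{2/m}), and
the SDPT gives Qdp ≥ (m·ln(3k/2)/8000)·Qsearch with Qsearch ≥ c√n, then
QCE ≥ ((m·ln(3/2) − 2·ln 3)/8000)·Qsearch, i.e. QCE = Ω(m√n). -/
theorem ce_lower_bound_composition (m n : ℕ) (hm : 1 ≤ m) (hn : 1 ≤ n)
    (B ε : ℝ) (hB : 0 < B) (hε0 : 0 < ε) (hε1 : ε < 1 / 3) (hε2 : ε < 2 * B / (3 * m))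
    (c QCE Qdp Qsearch : ℝ) (hc : 0 ≤ c) (hQs0 : 0 ≤ Qsearch)
    (hsearch : c * Real.sqrt n ≤ Qsearch)
    (hred : Qdp ≤ QCE)
    (hSDPT : m * Real.log (3 / 2 * (1 / 3 + ε * m / B) ^ ((2 : ℝ) / m)) / 8000 * Qsearch
      ≤ Qdp) :
    (m * Real.log (3 / 2) - 2 * Real.log 3) / 8000 * Qsearch ≤ QCE := by
  set t : ℝ := 1 / 3 + ε * m / B with ht
  have hm0 : (0:ℝ) < m := by exact_mod_cast hm
  have ht0 : 0 < t := by positivity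
  have hlog : Real.log (3 / 2 * t ^ ((2:ℝ) / m))
      = Real.log (3 / 2) + (2 / m) * Real.log t := by
    rw [Real.log_mul (by norm_num) (by positivity), Real.log_rpow ht0]
  have hlt : -Real.log 3 ≤ Real.log t := by
    have : (1:ℝ)/3 ≤ t := by
      have : 0 ≤ ε * m / B := by positivity
      linarith
    calc -Real.log 3 = Real.log (1/3) := by
          rw [Real.log_div one_ne_zero (by norm_num), Real.log_one]; ring
      _ ≤ Real.log t := Real.log_le_log (by norm_num) this
  have key : m * Real.log (3/2) - 2 * Real.log 3
      ≤ m * Real.log (3 / 2 * t ^ ((2:ℝ) / m)) := by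
    rw [hlog, mul_add]
    have : m * ((2 / m) * Real.log t) = 2 * Real.log t := by
      field_simp
    rw [this]
    nlinarith
  calc (m * Real.log (3/2) - 2 * Real.log 3) / 8000 * Qsearch
      ≤ m * Real.log (3 / 2 * t ^ ((2:ℝ) / m)) / 8000 * Qsearch := by
        apply mul_le_mul_of_nonneg_right _ hQs0
        linarith
    _ ≤ Qdp := hSDPT
    _ ≤ QCE := hred
end
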